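/- Let j ≥ 1 be a natural number and let b : {1,…,j} × {n : ℕ, n ≥ 2} → ℤ be a family of sequences satisfying b_k(2) = 1 for all 1 ≤ k ≤ j, and the recurrence b_j(n+1) = Σ_{k=1}^{j} C(j,k)·b_k(n) for all n ≥ 2 (and similarly for each lower index). Then b_j(n) = (n−1)^j − (n−2)^j for all n ≥ 2. -/

import Mathlib

lemma binom_sum_aux (k : ℕ) (x : ℤ) :
    ∑ i ∈ Finset.Icc 1 k, (Nat.choose k i : ℤ) * x ^ i = (x + 1) ^ k - 1 := by
  have h : (x + 1) ^ k = ∑ i ∈ Finset.range (k + 1), x ^ i * (Nat.choose k i : ℤ) := by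
    rw [add_pow]; simp
  have hIcc : Finset.Icc 1 k = Finset.Ioc 0 k := by
    ext i; simp [Nat.lt_iff_add_one_le]
  have hins : Finset.range (k + 1) = insert 0 (Finset.Ioc 0 k) := by
    ext i
    simp [Finset.mem_range]
  rw [hIcc, h, hins, Finset.sum_insert (by simp)]
  simp [mul_comm]

theorem stmt_2 (j : ℕ) (hj : 1 ≤ j) (b : ℕ → ℕ → ℤ)
    (hbase : ∀ k, 1 ≤ k → k ≤ j → b k 2 = 1)
    (hrec : ∀ k, 1 ≤ k → k ≤ j → ∀ n, 2 ≤ n →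
      b k (n + 1) = ∑ i ∈ Finset.Icc 1 k, (Nat.choose k i : ℤ) * b i n) :
    ∀ n, 2 ≤ n → b j n = ((n : ℤ) - 1) ^ j - ((n : ℤ) - 2) ^ j := by
  have key : ∀ n, 2 ≤ n → ∀ k, 1 ≤ k → k ≤ j →
      b k n = ((n : ℤ) - 1) ^ k - ((n : ℤ) - 2) ^ k := by
    intro n hn
    induction n, hn using Nat.le_induction with
    | base =>
      intro k hk1 hkj
      rw [hbase k hk1 hkj]
      norm_num
      rw [zero_pow (by omega)]
      ring
    | succ n hn ih =>
      intro k hk1 hkj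
      rw [hrec k hk1 hkj n hn]
      have : ∑ i ∈ Finset.Icc 1 k, (Nat.choose k i : ℤ) * b i n
          = ∑ i ∈ Finset.Icc 1 k, (Nat.choose k i : ℤ) *
              (((n : ℤ) - 1) ^ i - ((n : ℤ) - 2) ^ i) := by
        apply Finset.sum_congr rfl
        intro i hi
        simp only [Finset.mem_Icc] at hi
        rw [ih i hi.1 (le_trans hi.2 hkj)]
      rw [this]
      have h1 := binom_sum_aux k ((n : ℤ) - 1)
      have h2 := binom_sum_aux k ((n : ℤ) - 2)
      have : ∑ i ∈ Finset.Icc 1 k, (Nat.choose k i : ℤ) *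
              (((n : ℤ) - 1) ^ i - ((n : ℤ) - 2) ^ i)
          = (∑ i ∈ Finset.Icc 1 k, (Nat.choose k i : ℤ) * ((n : ℤ) - 1) ^ i)
          - (∑ i ∈ Finset.Icc 1 k, (Nat.choose k i : ℤ) * ((n : ℤ) - 2) ^ i) := by
        rw [← Finset.sum_sub_distrib]
        apply Finset.sum_congr rfl
        intros; ring
      rw [this, h1, h2]
      push_cast
      ring_nf
  intro n hn
  exact key n hn j hj le_rfl
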